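/- Let R be a (left) nearfield which is not distributive, i.e. there exist α, β, λ ∈ R with (α+β)·λ ≠ α·λ + β·λ, and let n be a positive integer. For any vectors v_1, …, v_k ∈ R^n there exists a set J ⊆ {1, …, n} such that span(v_1, …, v_k) = { x ∈ R^n : x_j = 0 for all j ∉ J }. -/
import Mathlib


/-- A (left) nearfield: `(R,+)` is an abelian group, multiplication is associative
with identity `1 ≠ 0`, every nonzero element has a two-sided inverse,
`0` multiplies to `0` on both sides, and the left distributive law holds. -/
class Nearfield (R : Type*) extends AddCommGroup R, One R, Mul R where
  mul_assoc : ∀ a b c : R, a * b * c = a * (b * c)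
  one_mul : ∀ a : R, 1 * a = a
  mul_one : ∀ a : R, a * 1 = a
  one_ne_zero : (1 : R) ≠ 0
  zero_mul : ∀ a : R, 0 * a = 0
  mul_zero : ∀ a : R, a * 0 = 0
  left_distrib : ∀ a b c : R, a * (b + c) = a * b + a * c
  exists_inv : ∀ a : R, a ≠ 0 → ∃ b : R, a * b = 1 ∧ b * a = 1

variable {R : Type*} [Nearfield R] {n : ℕ}

/-- Right scalar multiplication on `R^n`: `(x · r) j = x j * r`. -/
def vsmul (x : Fin n → R) (r : R) : Fin n → R := fun j => x j * r

/-- An `R`-subgroup of `R^n`: an additive subgroup closed under right scalar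
multiplication. -/
def IsRSubgroup (S : Set (Fin n → R)) : Prop :=
  (0 : Fin n → R) ∈ S ∧ (∀ x ∈ S, ∀ y ∈ S, x + y ∈ S) ∧ (∀ x ∈ S, -x ∈ S) ∧
    ∀ x ∈ S, ∀ r : R, vsmul x r ∈ S

/-- `nvGen V` is the smallest `R`-subgroup of `R^n` containing `V`
(the intersection of all `R`-subgroups containing `V`). -/
def nvGen (V : Set (Fin n → R)) : Set (Fin n → R) :=
  { x | ∀ S : Set (Fin n → R), IsRSubgroup S → V ⊆ S → x ∈ S }

/-- A subspace of `R^n`: an additive subgroup `N` with `(x+y)·r − x·r ∈ N`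
for all `x ∈ R^n`, `y ∈ N`, `r ∈ R`. -/
def IsSubspace (N : Set (Fin n → R)) : Prop :=
  (0 : Fin n → R) ∈ N ∧ (∀ x ∈ N, ∀ y ∈ N, x + y ∈ N) ∧ (∀ x ∈ N, -x ∈ N) ∧
    ∀ x : Fin n → R, ∀ y ∈ N, ∀ r : R, vsmul (x + y) r - vsmul x r ∈ N

/-- `nvSpan V` is the smallest subspace of `R^n` containing `V`. -/
def nvSpan (V : Set (Fin n → R)) : Set (Fin n → R) :=
  { x | ∀ N : Set (Fin n → R), IsSubspace N → V ⊆ N → x ∈ N }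

/-- `nvLC V 0 = V` and `nvLC V (m+1)` is the set of all finite right `R`-linear
combinations of elements of `nvLC V m`. -/
def nvLC (V : Set (Fin n → R)) : ℕ → Set (Fin n → R)
  | 0 => V
  | m + 1 => { x | ∃ F : Finset (Fin n → R), ↑F ⊆ nvLC V m ∧
      ∃ lam : (Fin n → R) → R, x = ∑ w ∈ F, vsmul w (lam w) }

lemma subspace_smul_mem {N : Set (Fin n → R)} (hN : IsSubspace N)
    {y : Fin n → R} (hy : y ∈ N) (r : R) : vsmul y r ∈ N := by
  have h := hN.2.2.2 0 y hy r
  have h0 : vsmul (0 : Fin n → R) r = 0 := by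
    funext j; simp [vsmul, Nearfield.zero_mul]
  rw [zero_add, h0, sub_zero] at h
  exact h

/-- Key lemma: if a subspace contains a vector with nonzero `j0`-coordinate,
it contains every multiple of the `j0`-th standard basis vector. -/
lemma subspace_single_mem (hd : ∃ α β lam : R, (α + β) * lam ≠ α * lam + β * lam)
    {N : Set (Fin n → R)} (hN : IsSubspace N) {y : Fin n → R} (hy : y ∈ N)
    {j0 : Fin n} (hj0 : y j0 ≠ 0) (t : R) :
    (fun i => if i = j0 then t else 0) ∈ N := by
  obtain ⟨α, β, lam, hδ⟩ := hd
  obtain ⟨c, hc1, hc2⟩ := Nearfield.exists_inv (y j0) hj0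
  -- z' = y · (c * β) has j0-coordinate β
  set z' : Fin n → R := vsmul y (c * β) with hz'
  have hz'N : z' ∈ N := subspace_smul_mem hN hy _
  have hz'j0 : z' j0 = β := by
    simp only [hz', vsmul]
    rw [← Nearfield.mul_assoc, hc1, Nearfield.one_mul]
  set x : Fin n → R := fun i => if i = j0 then α else 0 with hx
  set w : Fin n → R := vsmul (x + z') lam - vsmul x lam - vsmul z' lam with hw
  have hwN : w ∈ N := by
    have h1 : vsmul (x + z') lam - vsmul x lam ∈ N := hN.2.2.2 x z' hz'N lam
    have h2 : -(vsmul z' lam) ∈ N := hN.2.2.1 _ (subspace_smul_mem hN hz'N lam)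
    have := hN.2.1 _ h1 _ h2
    rwa [← sub_eq_add_neg] at this
  set δ : R := (α + β) * lam - α * lam - β * lam with hδdef
  have hδne : δ ≠ 0 := by
    intro h
    apply hδ
    rw [hδdef, sub_sub, sub_eq_zero] at h
    exact h
  have hwval : w = fun i => if i = j0 then δ else 0 := by
    funext i
    by_cases hi : i = j0
    · subst hi
      simp only [hw, vsmul, Pi.add_apply, Pi.sub_apply, hx, if_pos rfl, hz'j0, hδdef]
      simp
    · simp only [hw, vsmul, Pi.add_apply, Pi.sub_apply, hx, if_neg hi]
      rw [zero_add, Nearfield.zero_mul, sub_zero, sub_self]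
  obtain ⟨d, hd1, hd2⟩ := Nearfield.exists_inv δ hδne
  have : vsmul w (d * t) ∈ N := subspace_smul_mem hN hwN _
  have heq : vsmul w (d * t) = fun i => if i = j0 then t else 0 := by
    funext i
    by_cases hi : i = j0
    · subst hi
      simp only [vsmul, hwval, if_pos rfl]
      rw [if_pos trivial, ← Nearfield.mul_assoc, hd1, Nearfield.one_mul]
    · simp only [vsmul, hwval, if_neg hi]
      exact Nearfield.zero_mul _
  rwa [heq] at this

lemma nvSpan_isSubspace (V : Set (Fin n → R)) : IsSubspace (nvSpan V) := by
  refine ⟨fun N hN _ => hN.1, fun x hx y hy N hN hV => hN.2.1 x (hx N hN hV) y (hy N hN hV),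
    fun x hx N hN hV => hN.2.2.1 x (hx N hN hV),
    fun x y hy r N hN hV => hN.2.2.2 x y (hy N hN hV) r⟩

/-- in a non-distributive nearfield, the span of finitely many
vectors of `R^n` is a coordinate subspace `{x | x_j = 0 for all j ∉ J}`. -/
theorem span_classification (hd : ∃ α β lam : R, (α + β) * lam ≠ α * lam + β * lam)
    (hn : 0 < n) {k : ℕ} (v : Fin k → (Fin n → R)) :
    ∃ J : Set (Fin n),
      nvSpan (Set.range v) = { x : Fin n → R | ∀ j ∉ J, x j = 0 } := by
  set V := Set.range v
  refine ⟨{j | ∃ x ∈ nvSpan V, x j ≠ 0}, Set.ext fun x => ⟨?_, ?_⟩⟩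
  · intro hx j hj
    by_contra h
    exact hj ⟨x, hx, h⟩
  · intro hx
    have hsum : x = ∑ j : Fin n, (fun i => if i = j then x j else 0) := by
      funext i
      rw [Finset.sum_apply]
      simp
    rw [hsum]
    have hspan := nvSpan_isSubspace V
    refine Finset.sum_induction _ (· ∈ nvSpan V) (fun a b ha hb => hspan.2.1 a ha b hb)
      hspan.1 ?_
    intro j _
    by_cases hj : j ∈ {j | ∃ x ∈ nvSpan V, x j ≠ 0}
    · obtain ⟨y, hy, hyj⟩ := hj
      intro N hN hV
      exact subspace_single_mem hd hN (hy N hN hV) hyj (x j)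
    · have : x j = 0 := hx j hj
      rw [this]
      have : (fun i => if i = j then (0:R) else 0) = (0 : Fin n → R) := by
        funext i; simp
      rw [this]
      exact hspan.1
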